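/- Let L be a frame and let f = (u, v) be a pair satisfying (R1)–(R4) which is nonnegative (v 0 = ⊥, equivalently u p = ⊤ for all p < 0) and such that u r is complemented for every r ∈ ℚ and, moreover, for every sequence (r_m)_{m∈ℕ} of rationals the join ⨆_{m∈ℕ} u r_m is complemented in L. Define recursively a_1 := u 1 and f_1 := χ_{a_1}, and for k ≥ 2, a_k := ⨆_{t∈ℚ} (u t ⊓ v_{f_{k-1}}(t − 1/k)) and f_k := f_{k-1} + (1/k)·χ_{a_k}. Then each a_k is complemented, the sequence (f_k)_{k∈ℕ} is increasing with f_k ≤ f for all k (i.e. u_{f_k} p ≤ u p for all p), and u p = ⨆_{k∈ℕ} u_{f_k} p for every p ∈ ℚ; that is, f is the limit (= supremum) of the increasing sequence of nonnegative simple functions (f_k). -/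

import Mathlib

/-- A pair of maps `u, v : ℚ → L`, encoding a real-valued function on the frame `L`
via `f(p,—) = u p`, `f(—,q) = v q`. -/
structure MP (L : Type*) where
  u : ℚ → L
  v : ℚ → L

namespace MP

variable {L : Type*} [Order.Frame L]

/-- The order on pairs: `f ≤ g` iff `u_f p ≤ u_g p` and `v_g q ≤ v_f q` for all rationals. -/
def le (f g : MP L) : Prop :=
  (∀ p : ℚ, f.u p ≤ g.u p) ∧ (∀ q : ℚ, g.v q ≤ f.v q)

/-- The sum of two pairs. -/
noncomputable def add (f g : MP L) : MP L where
  u := fun p => ⨆ t : ℚ, f.u t ⊓ g.u (p - t)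
  v := fun q => ⨆ t : ℚ, f.v t ⊓ g.v (q - t)

/-- The join of two pairs. -/
def sup (f g : MP L) : MP L where
  u := fun p => f.u p ⊔ g.u p
  v := fun q => f.v q ⊓ g.v q

/-- The negation of a pair. -/
def neg (f : MP L) : MP L where
  u := fun p => f.v (-p)
  v := fun q => f.u (-q)

end MP

/-- The zero pair `𝟎`. -/
noncomputable def zeroMP (L : Type*) [Order.Frame L] : MP L where
  u := fun p => if p < 0 then ⊤ else ⊥
  v := fun q => if q ≤ 0 then ⊥ else ⊤

/-- The scaled characteristic pair `r·χ_a`, for a rational `r` and a complemented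
element `a` with complement `ac`. -/
noncomputable def sChi {L : Type*} [Order.Frame L] (r : ℚ) (a ac : L) : MP L where
  u := fun p =>
    if 0 < r then (if p < 0 then ⊤ else if p < r then a else ⊥)
    else if r = 0 then (if p < 0 then ⊤ else ⊥)
    else (if p < r then ⊤ else if p < 0 then ac else ⊥)
  v := fun q =>
    if 0 < r then (if q ≤ 0 then ⊥ else if q ≤ r then ac else ⊤)
    else if r = 0 then (if q ≤ 0 then ⊥ else ⊤)
    else (if q ≤ r then ⊥ else if q ≤ 0 then a else ⊤)

/-- Iterated sum of a finite list of pairs. -/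
noncomputable def sumMP {L : Type*} [Order.Frame L] : List (MP L) → MP L
  | [] => zeroMP L
  | [f] => f
  | f :: g :: fs => f.add (sumMP (g :: fs))

/-- A pair satisfies the defining relations (R1)–(R4) of the frame of extended reals. -/
def IsMeasPair {L : Type*} [Order.Frame L] (f : MP L) : Prop :=
  (∀ p q : ℚ, q ≤ p → f.u p ⊓ f.v q = ⊥) ∧
  (∀ p q : ℚ, p < q → f.u p ⊔ f.v q = ⊤) ∧
  (∀ p : ℚ, f.u p = ⨆ r : ℚ, ⨆ _ : p < r, f.u r) ∧
  (∀ q : ℚ, f.v q = ⨆ s : ℚ, ⨆ _ : s < q, f.v s)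

/-- The recursively defined sequence `(a_k, f_k)` (indexed so that index `k` corresponds
to stage `k+1`): `a_1 := u 1`, `f_1 := χ_{a_1}`, and for `k ≥ 2`,
`a_k := (f − f_{k−1})(1/k, —) = ⨆_t (u t ⊓ v_{f_{k−1}}(t − 1/k))`,
`f_k := f_{k−1} + (1/k)·χ_{a_k}` (the complement of `a_k` being its pseudocomplement,
which is its complement whenever `a_k` is complemented). -/
noncomputable def decompSeq {L : Type*} [Order.Frame L] (u : ℚ → L) : ℕ → L × MP L
  | 0 => (u 1, sChi 1 (u 1) (u 1)ᶜ)
  | k + 1 =>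
    let prev := decompSeq u k
    let a : L := ⨆ t : ℚ, u t ⊓ prev.2.v (t - 1 / ((k : ℚ) + 2))
    (a, prev.2.add (sChi (1 / ((k : ℚ) + 2)) a aᶜ))


section Helpers
variable {L : Type*} [Order.Frame L]

/-- If `a` has a complement, then its pseudocomplement is a complement. -/
lemma isCompl_compl_of_exists {a : L} (h : ∃ b, IsCompl a b) : IsCompl a aᶜ := by
  obtain ⟨b, hb⟩ := h
  have hb' : b ≤ aᶜ := le_compl_iff_disjoint_left.2 hb.disjoint
  exact ⟨disjoint_compl_right, hb.codisjoint.mono_right hb'⟩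

lemma exists_compl_sup {a b : L} (ha : ∃ c, IsCompl a c) (hb : ∃ c, IsCompl b c) :
    ∃ c, IsCompl (a ⊔ b) c := by
  obtain ⟨c1, h1⟩ := ha; obtain ⟨c2, h2⟩ := hb; exact ⟨c1 ⊓ c2, h1.sup_inf h2⟩

lemma exists_compl_inf {a b : L} (ha : ∃ c, IsCompl a c) (hb : ∃ c, IsCompl b c) :
    ∃ c, IsCompl (a ⊓ b) c := by
  obtain ⟨c1, h1⟩ := ha; obtain ⟨c2, h2⟩ := hb; exact ⟨c1 ⊔ c2, h1.inf_sup h2⟩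

lemma exists_compl_finsetSup {ι : Type*} (S : Finset ι) (g : ι → L)
    (h : ∀ i ∈ S, ∃ c, IsCompl (g i) c) : ∃ c, IsCompl (S.sup g) c := by
  classical
  induction S using Finset.induction with
  | empty => exact ⟨⊤, by simpa using isCompl_bot_top⟩
  | insert x s hx ih =>
      rw [Finset.sup_insert]
      exact exists_compl_sup (h x (Finset.mem_insert_self x s))
        (ih fun i hi => h i (Finset.mem_insert_of_mem hi))

lemma anti_of_r3 (u : ℚ → L) (h : ∀ p : ℚ, u p = ⨆ s : ℚ, ⨆ _ : p < s, u s) :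
    ∀ p q : ℚ, p ≤ q → u q ≤ u p := by
  intro p q hpq
  rcases eq_or_lt_of_le hpq with rfl | h'
  · exact le_rfl
  · rw [h p]; exact le_iSup_of_le q (le_iSup_of_le h' le_rfl)

lemma mono_of_r4 (v : ℚ → L) (h : ∀ q : ℚ, v q = ⨆ s : ℚ, ⨆ _ : s < q, v s) :
    ∀ p q : ℚ, p ≤ q → v p ≤ v q := by
  intro p q hpq
  rcases eq_or_lt_of_le hpq with rfl | h'
  · exact le_rfl
  · rw [h q]; exact le_iSup_of_le p (le_iSup_of_le h' le_rfl)

end Helpers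
section SChi
variable {L : Type*} [Order.Frame L]

lemma sChi_u_pos {r : ℚ} (hr : 0 < r) (a c : L) (p : ℚ) :
    (sChi r a c).u p = if p < 0 then ⊤ else if p < r then a else ⊥ := by
  simp [sChi, hr]

lemma sChi_v_pos {r : ℚ} (hr : 0 < r) (a c : L) (q : ℚ) :
    (sChi r a c).v q = if q ≤ 0 then ⊥ else if q ≤ r then c else ⊤ := by
  simp [sChi, hr]

lemma sChi_u_anti {r : ℚ} (hr : 0 < r) (a c : L) :
    ∀ p q : ℚ, p ≤ q → (sChi r a c).u q ≤ (sChi r a c).u p := by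
  intro p q h
  rw [sChi_u_pos hr a c p, sChi_u_pos hr a c q]
  split_ifs <;> first | exact le_rfl | exact le_top | exact bot_le | (exfalso; linarith)

lemma sChi_v_mono {r : ℚ} (hr : 0 < r) (a c : L) :
    ∀ p q : ℚ, p ≤ q → (sChi r a c).v p ≤ (sChi r a c).v q := by
  intro p q h
  rw [sChi_v_pos hr a c p, sChi_v_pos hr a c q]
  split_ifs <;> first | exact le_rfl | exact le_top | exact bot_le | (exfalso; linarith)

lemma sChi_r1 {r : ℚ} (hr : 0 < r) (a c : L) (hac : a ⊓ c = ⊥) (p q : ℚ) (hqp : q ≤ p) :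
    (sChi r a c).u p ⊓ (sChi r a c).v q = ⊥ := by
  rw [sChi_u_pos hr a c p, sChi_v_pos hr a c q]
  split_ifs <;> first | (exfalso; linarith) | simp | exact hac

lemma sChi_r2 {r : ℚ} (hr : 0 < r) (a c : L) (hac : a ⊔ c = ⊤) (p q : ℚ) (hpq : p < q) :
    (sChi r a c).u p ⊔ (sChi r a c).v q = ⊤ := by
  rw [sChi_u_pos hr a c p, sChi_v_pos hr a c q]
  split_ifs <;> first | (exfalso; linarith) | simp | exact hac

lemma sChi_r3 {r : ℚ} (hr : 0 < r) (a c : L) (p : ℚ) :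
    (sChi r a c).u p = ⨆ s : ℚ, ⨆ _ : p < s, (sChi r a c).u s := by
  apply le_antisymm
  · by_cases h1 : p < 0
    · refine le_iSup_of_le (p/2) (le_iSup_of_le (by linarith) ?_)
      rw [sChi_u_pos hr a c p, sChi_u_pos hr a c (p/2), if_pos h1,
        if_pos (by linarith : p/2 < (0:ℚ))]
    · by_cases h2 : p < r
      · refine le_iSup_of_le ((p+r)/2) (le_iSup_of_le (by linarith) ?_)
        rw [sChi_u_pos hr a c p, sChi_u_pos hr a c ((p+r)/2),
          if_neg h1, if_pos h2, if_neg (by linarith : ¬ (p+r)/2 < 0),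
          if_pos (by linarith : (p+r)/2 < r)]
      · rw [sChi_u_pos hr a c p, if_neg h1, if_neg h2]; exact bot_le
  · exact iSup_le fun s => iSup_le fun hs => sChi_u_anti hr a c p s hs.le

lemma sChi_r4 {r : ℚ} (hr : 0 < r) (a c : L) (q : ℚ) :
    (sChi r a c).v q = ⨆ s : ℚ, ⨆ _ : s < q, (sChi r a c).v s := by
  apply le_antisymm
  · by_cases h1 : q ≤ 0
    · rw [sChi_v_pos hr a c q, if_pos h1]; exact bot_le
    · by_cases h2 : q ≤ r
      · refine le_iSup_of_le (q/2) (le_iSup_of_le (by linarith) ?_)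
        rw [sChi_v_pos hr a c q, sChi_v_pos hr a c (q/2),
          if_neg h1, if_pos h2, if_neg (by linarith : ¬ q/2 ≤ 0),
          if_pos (by linarith : q/2 ≤ r)]
      · refine le_iSup_of_le ((r+q)/2) (le_iSup_of_le (by linarith) ?_)
        rw [sChi_v_pos hr a c q, sChi_v_pos hr a c ((r+q)/2),
          if_neg h1, if_neg h2, if_neg (by linarith : ¬ (r+q)/2 ≤ 0),
          if_neg (by linarith : ¬ (r+q)/2 ≤ r)]
  · exact iSup_le fun s => iSup_le fun hs => sChi_v_mono hr a c s q hs.le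

lemma add_sChi_u (F : MP L) {r : ℚ} (hr : 0 < r) (a c : L)
    (hr3 : ∀ p : ℚ, F.u p = ⨆ s : ℚ, ⨆ _ : p < s, F.u s) (p : ℚ) :
    (F.add (sChi r a c)).u p = F.u p ⊔ (a ⊓ F.u (p - r)) := by
  have hanti := anti_of_r3 F.u hr3
  apply le_antisymm
  · refine iSup_le fun t => ?_
    rw [sChi_u_pos hr]
    by_cases h1 : p - t < 0
    · rw [if_pos h1, inf_top_eq]
      exact le_sup_of_le_left (hanti p t (by linarith))
    · rw [if_neg h1]
      by_cases h2 : p - t < r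
      · rw [if_pos h2]
        refine le_sup_of_le_right ?_
        rw [inf_comm]
        exact inf_le_inf_left a (hanti (p-r) t (by linarith))
      · rw [if_neg h2]; simp
  · apply sup_le
    · rw [hr3 p]
      refine iSup_le fun s => iSup_le fun hs => le_iSup_of_le s ?_
      rw [sChi_u_pos hr, if_pos (by linarith : p - s < 0), inf_top_eq]
    · rw [hr3 (p - r), inf_iSup_eq]
      refine iSup_le fun s => ?_
      rw [inf_iSup_eq]
      refine iSup_le fun hs => le_iSup_of_le s ?_
      rw [sChi_u_pos hr]
      by_cases h1 : p - s < 0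
      · rw [if_pos h1, inf_top_eq]; exact inf_le_right
      · rw [if_neg h1, if_pos (by linarith : p - s < r), inf_comm]

lemma add_sChi_v (F : MP L) {r : ℚ} (hr : 0 < r) (a c : L)
    (hr4 : ∀ q : ℚ, F.v q = ⨆ s : ℚ, ⨆ _ : s < q, F.v s) (q : ℚ) :
    (F.add (sChi r a c)).v q = F.v (q - r) ⊔ (c ⊓ F.v q) := by
  have hmono := mono_of_r4 F.v hr4
  apply le_antisymm
  · refine iSup_le fun t => ?_
    rw [sChi_v_pos hr]
    by_cases h1 : q - t ≤ 0
    · rw [if_pos h1]; simp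
    · rw [if_neg h1]
      by_cases h2 : q - t ≤ r
      · rw [if_pos h2]
        refine le_sup_of_le_right ?_
        rw [inf_comm]
        exact inf_le_inf_left c (hmono t q (by linarith))
      · rw [if_neg h2, inf_top_eq]
        exact le_sup_of_le_left (hmono t (q-r) (by linarith))
  · apply sup_le
    · rw [hr4 (q-r)]
      refine iSup_le fun s => iSup_le fun hs => le_iSup_of_le s ?_
      rw [sChi_v_pos hr, if_neg (by linarith : ¬ q - s ≤ 0),
        if_neg (by linarith : ¬ q - s ≤ r), inf_top_eq]
    · rw [hr4 q, inf_iSup_eq]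
      refine iSup_le fun s => ?_
      rw [inf_iSup_eq]
      refine iSup_le fun hs => le_iSup_of_le s ?_
      rw [sChi_v_pos hr, if_neg (by linarith : ¬ q - s ≤ 0)]
      by_cases h2 : q - s ≤ r
      · rw [if_pos h2, inf_comm]
      · rw [if_neg h2, inf_top_eq]; exact inf_le_right

end SChi
section ACompl
variable {L : Type*} [Order.Frame L]

lemma a_complemented (u V : ℚ → L) (δ : ℚ)
    (hu3 : ∀ p : ℚ, u p = ⨆ s : ℚ, ⨆ _ : p < s, u s)
    (hVmono : ∀ x y : ℚ, x ≤ y → V x ≤ V y)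
    (hucpl : ∀ p, ∃ b, IsCompl (u p) b)
    (hVcpl : ∀ q, ∃ b, IsCompl (V q) b)
    (B : Finset ℚ) (h0 : (0:ℚ) ∈ B)
    (hvbot : ∀ q : ℚ, q ≤ 0 → V q = ⊥)
    (hstep : ∀ q q' : ℚ, q ≤ q' → (∀ b ∈ B, ¬(q ≤ b ∧ b < q')) → V q = V q') :
    ∃ b, IsCompl (⨆ t : ℚ, u t ⊓ V (t - δ)) b := by
  classical
  have hanti := anti_of_r3 u hu3
  set nxt : ℚ → ℚ := fun b =>
    if h : (B.filter (fun x => b < x)).Nonempty then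
      (b + (B.filter (fun x => b < x)).min' h) / 2
    else b + 1 with hnxt
  have hlt : ∀ b : ℚ, b < nxt b := by
    intro b
    by_cases h : (B.filter (fun x => b < x)).Nonempty
    · have hm := ((B.filter (fun x => b < x)).min'_mem h)
      rw [Finset.mem_filter] at hm
      simp only [hnxt, dif_pos h]
      linarith [hm.2]
    · simp only [hnxt, dif_neg h]; linarith
  have hno : ∀ b : ℚ, ∀ b' ∈ B, ¬(b < b' ∧ b' ≤ nxt b) := by
    rintro b b' hb' ⟨h1, h2⟩
    have hne : (B.filter (fun x => b < x)).Nonempty :=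
      ⟨b', Finset.mem_filter.2 ⟨hb', h1⟩⟩
    have hmin : (B.filter (fun x => b < x)).min' hne ≤ b' :=
      Finset.min'_le _ _ (Finset.mem_filter.2 ⟨hb', h1⟩)
    have hminb : b < (B.filter (fun x => b < x)).min' hne := by
      have hm := (B.filter (fun x => b < x)).min'_mem hne
      rw [Finset.mem_filter] at hm; exact hm.2
    simp only [hnxt, dif_pos hne] at h2
    linarith
  have key : (⨆ t : ℚ, u t ⊓ V (t - δ)) = B.sup (fun b => u (b + δ) ⊓ V (nxt b)) := by
    apply le_antisymm
    · refine iSup_le fun t => ?_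
      by_cases ht : t - δ ≤ 0
      · rw [hvbot _ ht, inf_bot_eq]; exact bot_le
      · push_neg at ht
        have hCne : (B.filter (fun x => x < t - δ)).Nonempty :=
          ⟨0, Finset.mem_filter.2 ⟨h0, ht⟩⟩
        obtain ⟨b, hbmem, hmax'⟩ : ∃ b ∈ B.filter (fun x => x < t - δ),
            ∀ x ∈ B.filter (fun x => x < t - δ), x ≤ b :=
          ⟨_, (B.filter (fun x => x < t - δ)).max'_mem hCne,
            fun x hx => Finset.le_max' _ x hx⟩
        have hbB : b ∈ B ∧ b < t - δ := Finset.mem_filter.1 hbmem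
        have hmax : ∀ b' ∈ B, b' < t - δ → b' ≤ b :=
          fun b' h1 h2 => hmax' b' (Finset.mem_filter.2 ⟨h1, h2⟩)
        have hVeq : V (t - δ) = V (nxt b) := by
          rcases le_total (nxt b) (t - δ) with h | h
          · refine (hstep (nxt b) (t - δ) h ?_).symm
            rintro b' hb' ⟨h1, h2⟩
            have := hmax b' hb' h2
            have := hlt b
            linarith
          · refine hstep (t - δ) (nxt b) h ?_
            rintro b' hb' ⟨h1, h2⟩
            exact hno b b' hb' ⟨by linarith [hbB.2], by linarith⟩
        rw [hVeq]
        exact le_trans (inf_le_inf_right _ (hanti (b + δ) t (by linarith [hbB.2])))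
          (Finset.le_sup (f := fun b => u (b + δ) ⊓ V (nxt b)) hbB.1)
    · refine Finset.sup_le fun b hb => ?_
      rw [hu3 (b + δ), iSup_inf_eq]
      refine iSup_le fun s => ?_
      rw [iSup_inf_eq]
      refine iSup_le fun hs => ?_
      rcases le_total (nxt b) (s - δ) with h | h
      · exact le_iSup_of_le s (inf_le_inf_left _ (hVmono _ _ h))
      · have heq : V (s - δ) = V (nxt b) := by
          refine hstep (s - δ) (nxt b) h ?_
          rintro b' hb' ⟨h1, h2⟩
          exact hno b b' hb' ⟨by linarith, by linarith⟩
        rw [← heq]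
        exact le_iSup_of_le s le_rfl
  rw [key]
  exact exists_compl_finsetSup B _ fun b _ => exists_compl_inf (hucpl _) (hVcpl _)

end ACompl
section Main
variable {L : Type*} [Order.Frame L]

lemma decompSeq_succ_fst (u : ℚ → L) (k : ℕ) :
    (decompSeq u (k+1)).1 = ⨆ t : ℚ, u t ⊓ (decompSeq u k).2.v (t - 1 / ((k : ℚ) + 2)) := rfl

lemma decompSeq_succ_snd (u : ℚ → L) (k : ℕ) :
    (decompSeq u (k+1)).2 =
      (decompSeq u k).2.add
        (sChi (1 / ((k : ℚ) + 2)) (decompSeq u (k+1)).1 ((decompSeq u (k+1)).1)ᶜ) := rfl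

structure DInv (f : MP L) (k : ℕ) : Prop where
  complA : ∃ b, IsCompl ((decompSeq f.u k).1) b
  r1 : ∀ p q : ℚ, q ≤ p → (decompSeq f.u k).2.u p ⊓ (decompSeq f.u k).2.v q = ⊥
  r2 : ∀ p q : ℚ, p < q → (decompSeq f.u k).2.u p ⊔ (decompSeq f.u k).2.v q = ⊤
  r3 : ∀ p : ℚ, (decompSeq f.u k).2.u p = ⨆ s : ℚ, ⨆ _ : p < s, (decompSeq f.u k).2.u s
  r4 : ∀ q : ℚ, (decompSeq f.u k).2.v q = ⨆ s : ℚ, ⨆ _ : s < q, (decompSeq f.u k).2.v s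
  utop : ∀ p : ℚ, p < 0 → (decompSeq f.u k).2.u p = ⊤
  vbot : ∀ q : ℚ, q ≤ 0 → (decompSeq f.u k).2.v q = ⊥
  vcpl : ∀ q : ℚ, ∃ b, IsCompl ((decompSeq f.u k).2.v q) b
  leu : ∀ p : ℚ, (decompSeq f.u k).2.u p ≤ f.u p
  lev : ∀ q : ℚ, f.v q ≤ (decompSeq f.u k).2.v q
  step : ∃ B : Finset ℚ, (0:ℚ) ∈ B ∧ ∀ q q' : ℚ, q ≤ q' →
    (∀ b ∈ B, ¬(q ≤ b ∧ b < q')) → (decompSeq f.u k).2.v q = (decompSeq f.u k).2.v q'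

lemma dinv (f : MP L) (hf : IsMeasPair f) (hnn : f.v 0 = ⊥)
    (hc : ∀ r : ℚ, IsCompl (f.u r) (f.u r)ᶜ) : ∀ k, DInv f k := by
  obtain ⟨hf1, hf2, hf3, hf4⟩ := hf
  have huanti := anti_of_r3 f.u hf3
  have hvmono := mono_of_r4 f.v hf4
  have hfvbot : ∀ q : ℚ, q ≤ 0 → f.v q = ⊥ := fun q hq => le_bot_iff.1 (hnn ▸ hvmono q 0 hq)
  have hfutop : ∀ p : ℚ, p < 0 → f.u p = ⊤ := by
    intro p hp
    have h := hf2 p 0 hp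
    rwa [hnn, sup_bot_eq] at h
  intro k
  induction k with
  | zero =>
      have e2 : (decompSeq f.u 0).2 = sChi 1 (f.u 1) (f.u 1)ᶜ := rfl
      refine ⟨⟨(f.u 1)ᶜ, hc 1⟩, ?_, ?_, ?_, ?_, ?_, ?_, ?_, ?_, ?_, ?_⟩
      · intro p q h; rw [e2]; exact sChi_r1 one_pos _ _ (hc 1).inf_eq_bot p q h
      · intro p q h; rw [e2]; exact sChi_r2 one_pos _ _ (hc 1).sup_eq_top p q h
      · intro p; rw [e2]; exact sChi_r3 one_pos _ _ p
      · intro q; rw [e2]; exact sChi_r4 one_pos _ _ q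
      · intro p hp; rw [e2, sChi_u_pos one_pos, if_pos hp]
      · intro q hq; rw [e2, sChi_v_pos one_pos, if_pos hq]
      · intro q; rw [e2, sChi_v_pos one_pos]
        split_ifs
        · exact ⟨⊤, isCompl_bot_top⟩
        · exact ⟨f.u 1, (hc 1).symm⟩
        · exact ⟨⊥, isCompl_top_bot⟩
      · intro p; rw [e2, sChi_u_pos one_pos]
        split_ifs with h1 h2
        · exact (hfutop p h1).symm.le
        · exact huanti p 1 (by linarith)
        · exact bot_le
      · intro q; rw [e2, sChi_v_pos one_pos]
        split_ifs with h1 h2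
        · exact (hfvbot q h1).le
        · exact le_compl_iff_disjoint_left.2 (disjoint_iff.2 (hf1 1 q h2))
        · exact le_top
      · refine ⟨{0, 1}, by norm_num, ?_⟩
        intro q q' hqq hnob
        have h0' := hnob 0 (by norm_num)
        have h1' := hnob 1 (by norm_num)
        rw [e2, sChi_v_pos one_pos, sChi_v_pos one_pos]
        by_cases hq0 : q ≤ 0
        · rw [if_pos hq0, if_pos (show q' ≤ 0 by by_contra hh; exact h0' ⟨hq0, by linarith⟩)]
        · rw [if_neg hq0, if_neg (show ¬ q' ≤ 0 from fun hh => hq0 (by linarith))]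
          by_cases hq1 : q ≤ 1
          · rw [if_pos hq1,
              if_pos (show q' ≤ 1 by by_contra hh; exact h1' ⟨hq1, by linarith⟩)]
          · rw [if_neg hq1, if_neg (show ¬ q' ≤ 1 from fun hh => hq1 (by linarith))]
  | succ k ih =>
      have hδ : 0 < 1 / ((k:ℚ) + 2) := by positivity
      obtain ⟨B, hB0, hBstep⟩ := ih.step
      have hVmono := mono_of_r4 _ ih.r4
      have hUanti := anti_of_r3 _ ih.r3
      have hacpl : ∃ b, IsCompl ((decompSeq f.u (k+1)).1) b := by
        rw [decompSeq_succ_fst]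
        exact a_complemented f.u (decompSeq f.u k).2.v _ hf3 hVmono
          (fun p => ⟨_, hc p⟩) ih.vcpl B hB0 ih.vbot hBstep
      have hAc : IsCompl ((decompSeq f.u (k+1)).1) ((decompSeq f.u (k+1)).1)ᶜ :=
        isCompl_compl_of_exists hacpl
      have hU : ∀ p : ℚ, (decompSeq f.u (k+1)).2.u p
          = (decompSeq f.u k).2.u p ⊔
            ((decompSeq f.u (k+1)).1 ⊓ (decompSeq f.u k).2.u (p - 1/((k:ℚ)+2))) := by
        intro p
        rw [decompSeq_succ_snd]
        exact add_sChi_u _ hδ _ _ ih.r3 p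
      have hV : ∀ q : ℚ, (decompSeq f.u (k+1)).2.v q
          = (decompSeq f.u k).2.v (q - 1/((k:ℚ)+2)) ⊔
            (((decompSeq f.u (k+1)).1)ᶜ ⊓ (decompSeq f.u k).2.v q) := by
        intro q
        rw [decompSeq_succ_snd]
        exact add_sChi_v _ hδ _ _ ih.r4 q
      refine ⟨hacpl, ?_, ?_, ?_, ?_, ?_, ?_, ?_, ?_, ?_, ?_⟩
      · -- r1
        intro p q hqp
        rw [hU p, hV q, inf_sup_right, inf_sup_left, inf_sup_left]
        refine le_bot_iff.1 (sup_le (sup_le ?_ ?_) (sup_le ?_ ?_))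
        · exact le_trans (inf_le_inf_left _ (hVmono _ _ (by linarith)))
            (ih.r1 p q hqp).le
        · exact le_trans (inf_le_inf_left _ inf_le_right) (ih.r1 p q hqp).le
        · exact le_trans (inf_le_inf_right _ inf_le_right)
            (ih.r1 (p - 1/((k:ℚ)+2)) (q - 1/((k:ℚ)+2)) (by linarith)).le
        · exact le_trans (inf_le_inf inf_le_left inf_le_left) hAc.inf_eq_bot.le
      · -- r2
        intro p q hpq
        rw [hU p, hV q]
        refine top_le_iff.1 (le_trans (ih.r2 p q hpq).ge ?_)
        refine sup_le (le_sup_of_le_left le_sup_left) ?_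
        have hsplit : (decompSeq f.u k).2.v q =
            ((decompSeq f.u k).2.v q ⊓ (decompSeq f.u (k+1)).1) ⊔
            ((decompSeq f.u k).2.v q ⊓ ((decompSeq f.u (k+1)).1)ᶜ) := by
          rw [← inf_sup_left, hAc.sup_eq_top, inf_top_eq]
        refine le_trans hsplit.le (sup_le ?_ ?_)
        · have h2 := ih.r2 (p - 1/((k:ℚ)+2)) (q - 1/((k:ℚ)+2)) (by linarith)
          have hstep2 : (decompSeq f.u k).2.v q ⊓ (decompSeq f.u (k+1)).1 ≤
              ((decompSeq f.u k).2.u (p - 1/((k:ℚ)+2)) ⊔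
               (decompSeq f.u k).2.v (q - 1/((k:ℚ)+2))) ⊓ (decompSeq f.u (k+1)).1 :=
            inf_le_inf_right _ (le_trans le_top h2.ge)
          rw [inf_sup_right] at hstep2
          refine le_trans hstep2 (sup_le ?_ ?_)
          · refine le_sup_of_le_left (le_sup_of_le_right ?_)
            rw [inf_comm]
          · exact le_sup_of_le_right (le_sup_of_le_left inf_le_left)
        · exact le_sup_of_le_right (le_sup_of_le_right (by rw [inf_comm]))
      · -- r3
        intro p
        apply le_antisymm
        · rw [hU p]
          apply sup_le
          · rw [ih.r3 p]
            refine iSup_le fun s => iSup_le fun hs => ?_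
            refine le_iSup_of_le s (le_iSup_of_le hs ?_)
            rw [hU s]; exact le_sup_left
          · rw [ih.r3 (p - 1/((k:ℚ)+2)), inf_iSup_eq]
            refine iSup_le fun s => ?_
            rw [inf_iSup_eq]
            refine iSup_le fun hs => ?_
            refine le_iSup_of_le (s + 1/((k:ℚ)+2)) (le_iSup_of_le (by linarith) ?_)
            rw [hU (s + 1/((k:ℚ)+2))]
            have he : s + 1/((k:ℚ)+2) - 1/((k:ℚ)+2) = s := by ring
            rw [he]
            exact le_sup_right
        · refine iSup_le fun s => iSup_le fun hs => ?_
          rw [hU s, hU p]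
          exact sup_le (le_sup_of_le_left (hUanti p s hs.le))
            (le_sup_of_le_right (inf_le_inf_left _ (hUanti _ _ (by linarith))))
      · -- r4
        intro q
        apply le_antisymm
        · rw [hV q]
          apply sup_le
          · rw [ih.r4 (q - 1/((k:ℚ)+2))]
            refine iSup_le fun s => iSup_le fun hs => ?_
            refine le_iSup_of_le (s + 1/((k:ℚ)+2)) (le_iSup_of_le (by linarith) ?_)
            rw [hV (s + 1/((k:ℚ)+2))]
            have he : s + 1/((k:ℚ)+2) - 1/((k:ℚ)+2) = s := by ring
            rw [he]
            exact le_sup_left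
          · rw [ih.r4 q, inf_iSup_eq]
            refine iSup_le fun s => ?_
            rw [inf_iSup_eq]
            refine iSup_le fun hs => ?_
            refine le_iSup_of_le s (le_iSup_of_le hs ?_)
            rw [hV s]
            exact le_sup_right
        · refine iSup_le fun s => iSup_le fun hs => ?_
          rw [hV s, hV q]
          exact sup_le (le_sup_of_le_left (hVmono _ _ (by linarith)))
            (le_sup_of_le_right (inf_le_inf_left _ (hVmono s q hs.le)))
      · -- utop
        intro p hp
        rw [hU p, ih.utop p hp]
        simp
      · -- vbot
        intro q hq
        rw [hV q, ih.vbot (q - 1/((k:ℚ)+2)) (by linarith), ih.vbot q hq]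
        simp
      · -- vcpl
        intro q
        rw [hV q]
        exact exists_compl_sup (ih.vcpl _)
          (exists_compl_inf ⟨_, hAc.symm⟩ (ih.vcpl q))
      · -- leu
        intro p
        rw [hU p]
        refine sup_le (ih.leu p) ?_
        rw [decompSeq_succ_fst, iSup_inf_eq]
        refine iSup_le fun t => ?_
        rcases le_total p t with h | h
        · exact le_trans inf_le_left (le_trans inf_le_left (huanti p t h))
        · exact le_trans (le_trans (le_inf inf_le_right
            (le_trans inf_le_left inf_le_right))
            (ih.r1 (p - 1/((k:ℚ)+2)) (t - 1/((k:ℚ)+2)) (by linarith)).le) bot_le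
      · -- lev
        intro q
        rw [hV q]
        have hsplit : f.v q = (f.v q ⊓ (decompSeq f.u (k+1)).1) ⊔
            (f.v q ⊓ ((decompSeq f.u (k+1)).1)ᶜ) := by
          rw [← inf_sup_left, hAc.sup_eq_top, inf_top_eq]
        refine le_trans hsplit.le (sup_le ?_ ?_)
        · rw [decompSeq_succ_fst, inf_iSup_eq]
          refine iSup_le fun t => ?_
          rcases le_total q t with h | h
          · exact le_trans (le_trans (le_inf (le_trans inf_le_right inf_le_left)
              inf_le_left) (hf1 t q h).le) bot_le
          · exact le_sup_of_le_left (le_trans (le_trans inf_le_right inf_le_right)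
              (hVmono _ _ (by linarith)))
        · refine le_sup_of_le_right ?_
          rw [inf_comm]
          exact inf_le_inf_left _ (ih.lev q)
      · -- step
        refine ⟨B ∪ B.image (· + 1/((k:ℚ)+2)), Finset.mem_union_left _ hB0, ?_⟩
        intro q q' hqq hnob
        rw [hV q, hV q']
        have e1 : (decompSeq f.u k).2.v q = (decompSeq f.u k).2.v q' :=
          hBstep q q' hqq (fun b hb hh => hnob b (Finset.mem_union_left _ hb) hh)
        have e2 : (decompSeq f.u k).2.v (q - 1/((k:ℚ)+2))
            = (decompSeq f.u k).2.v (q' - 1/((k:ℚ)+2)) := by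
          refine hBstep _ _ (by linarith) ?_
          rintro b hb ⟨hh1, hh2⟩
          exact hnob (b + 1/((k:ℚ)+2))
            (Finset.mem_union_right _ (Finset.mem_image.2 ⟨b, hb, rfl⟩))
            ⟨by linarith, by linarith⟩
        rw [e1, e2]

end Main
lemma harmonic_unbdd (C : ℚ) (k0 : ℕ) :
    ∃ n : ℕ, C ≤ ∑ i ∈ Finset.Ico k0 n, (1 / ((i:ℚ) + 2)) := by
  have h := Real.tendsto_sum_range_one_div_nat_succ_atTop
  set T : ℝ := (C:ℝ) + ∑ i ∈ Finset.range k0, (1/((i:ℝ)+2)) with hT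
  obtain ⟨mm, hmb, hma⟩ :=
    ((h.eventually_ge_atTop (T+1)).and (Filter.eventually_ge_atTop (k0+1))).exists
  set n := mm - 1 with hn
  have hm' : n + 1 = mm := by omega
  have hk0 : k0 ≤ n := by omega
  refine ⟨n, ?_⟩
  have key : (C:ℝ) ≤ ∑ i ∈ Finset.Ico k0 n, (1/((i:ℝ)+2)) := by
    have e : (∑ i ∈ Finset.range mm, 1/((i:ℝ)+1))
        = (∑ i ∈ Finset.range n, (1/((i:ℝ)+2))) + 1 := by
      rw [← hm', Finset.sum_range_succ']
      congr 1
      · refine Finset.sum_congr rfl fun i _ => ?_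
        push_cast; ring
      · norm_num
    have e2 : ∑ i ∈ Finset.Ico k0 n, (1/((i:ℝ)+2))
        = (∑ i ∈ Finset.range n, (1/((i:ℝ)+2))) - ∑ i ∈ Finset.range k0, (1/((i:ℝ)+2)) :=
      Finset.sum_Ico_eq_sub _ hk0
    have hS : T + 1 ≤ ∑ i ∈ Finset.range mm, 1/((i:ℝ)+1) := hmb
    rw [e2]
    rw [e] at hS
    rw [hT] at hS
    linarith
  have hc2 : ((∑ i ∈ Finset.Ico k0 n, (1 / ((i:ℚ) + 2)) : ℚ) : ℝ)
      = ∑ i ∈ Finset.Ico k0 n, (1/((i:ℝ)+2)) := by push_cast; rfl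
  refine (Rat.cast_le (K := ℝ)).1 ?_
  rw [hc2]; exact key

/-- Decomposition of a nonnegative measurable function as the limit (= supremum) of an
increasing sequence of nonnegative simple functions: each `a_k` is complemented, the
sequence `(f_k)` is increasing, `f_k ≤ f` (i.e. `u_{f_k} p ≤ u p` for all `p`), and
`u p = ⨆_k u_{f_k} p` for every rational `p`. -/
theorem decomposition_of_nonnegative {L : Type*} [Order.Frame L]
    (f : MP L) (hf : IsMeasPair f) (hnn : f.v 0 = ⊥)
    (hc : ∀ r : ℚ, IsCompl (f.u r) (f.u r)ᶜ)
    (hcseq : ∀ g : ℕ → ℚ, IsCompl (⨆ m, f.u (g m)) (⨆ m, f.u (g m))ᶜ) :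
    (∀ k, IsCompl (decompSeq f.u k).1 ((decompSeq f.u k).1)ᶜ) ∧
    (∀ k, ((decompSeq f.u k).2).le ((decompSeq f.u (k + 1)).2)) ∧
    (∀ k, ∀ p : ℚ, ((decompSeq f.u k).2).u p ≤ f.u p) ∧
    (∀ p : ℚ, f.u p = ⨆ k, ((decompSeq f.u k).2).u p) := by
  have hD := dinv f hf hnn hc
  obtain ⟨hf1, hf2, hf3, hf4⟩ := hf
  have huanti := anti_of_r3 f.u hf3
  refine ⟨fun k => isCompl_compl_of_exists (hD k).complA, ?_, fun k => (hD k).leu, ?_⟩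
  · -- increasing
    intro k
    have hδ : 0 < 1/((k:ℚ)+2) := by positivity
    constructor
    · intro p
      rw [decompSeq_succ_snd, add_sChi_u _ hδ _ _ (hD k).r3 p]
      exact le_sup_left
    · intro q
      rw [decompSeq_succ_snd, add_sChi_v _ hδ _ _ (hD k).r4 q]
      exact sup_le (mono_of_r4 _ (hD k).r4 _ _ (by linarith)) inf_le_right
  · -- the limit
    intro p
    apply le_antisymm
    · rw [hf3 p]
      refine iSup_le fun p' => iSup_le fun hp' => ?_
      set m : ℚ := (p + p')/2 with hm
      have hpm : p < m := by rw [hm]; linarith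
      have hmp' : m < p' := by rw [hm]; linarith
      obtain ⟨k0, hk0⟩ : ∃ k0 : ℕ, 1/((k0:ℚ)+2) ≤ p' - m := by
        obtain ⟨nn, hnn'⟩ := exists_nat_gt (1/(p' - m))
        refine ⟨nn, ?_⟩
        have h1 : (0:ℚ) < p' - m := by linarith
        have h2 : 1/(p' - m) < (nn:ℚ) + 2 := by linarith
        have h3 := one_div_lt_one_div_of_lt (by positivity : (0:ℚ) < 1/(p'-m)) h2
        rw [one_div_one_div] at h3
        exact h3.le
      have hsmall : ∀ k : ℕ, k0 ≤ k → 1/(((k:ℕ):ℚ)+2) ≤ p' - m := by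
        intro k hk
        refine le_trans ?_ hk0
        refine one_div_le_one_div_of_le (by positivity) ?_
        exact add_le_add_left (Nat.cast_le.2 hk) 2
      set d : ℕ → ℚ := fun j => -1 + ∑ i ∈ Finset.Ico k0 j, (1/((i:ℚ)+2)) with hd
      have Q : ∀ j : ℕ, f.u p' ≤ (decompSeq f.u (k0+j)).2.u p ⊔
          (f.u p' ⊓ (decompSeq f.u (k0+j)).2.v m ⊓ (decompSeq f.u (k0+j)).2.u (d (k0+j))) := by
        intro j
        induction j with
        | zero =>
            have hd0 : d (k0+0) = -1 := by simp [hd]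
            rw [Nat.add_zero] at hd0 ⊢
            rw [hd0, (hD k0).utop (-1) (by norm_num), inf_top_eq]
            have h2 := (hD k0).r2 p m hpm
            calc f.u p'
                = f.u p' ⊓ ((decompSeq f.u k0).2.u p ⊔ (decompSeq f.u k0).2.v m) := by
                  rw [h2, inf_top_eq]
              _ = (f.u p' ⊓ (decompSeq f.u k0).2.u p) ⊔ (f.u p' ⊓ (decompSeq f.u k0).2.v m) :=
                  inf_sup_left _ _ _
              _ ≤ _ := sup_le (le_sup_of_le_left inf_le_right) le_sup_right
        | succ j ihj =>
            have hidx : k0 + (j + 1) = (k0 + j) + 1 := rfl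
            rw [hidx]
            have hδ : (0:ℚ) < 1/(((k0+j:ℕ):ℚ)+2) := by positivity
            have hU : ∀ r : ℚ, (decompSeq f.u ((k0+j)+1)).2.u r
                = (decompSeq f.u (k0+j)).2.u r ⊔
                  ((decompSeq f.u ((k0+j)+1)).1 ⊓
                    (decompSeq f.u (k0+j)).2.u (r - 1/(((k0+j:ℕ):ℚ)+2))) := by
              intro r
              rw [decompSeq_succ_snd]
              exact add_sChi_u _ hδ _ _ (hD (k0+j)).r3 r
            have hdsucc : d ((k0+j)+1) = d (k0+j) + 1/(((k0+j:ℕ):ℚ)+2) := by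
              rw [hd]
              simp only
              rw [Finset.sum_Ico_succ_top (by omega : k0 ≤ k0+j)]
              ring
            refine le_trans ihj (sup_le ?_ ?_)
            · rw [hU p]
              exact le_sup_of_le_left le_sup_left
            · have h1 : f.u p' ⊓ (decompSeq f.u (k0+j)).2.v m ≤ (decompSeq f.u ((k0+j)+1)).1 := by
                rw [decompSeq_succ_fst]
                refine le_iSup_of_le p' (inf_le_inf_left _ ?_)
                exact mono_of_r4 _ (hD (k0+j)).r4 _ _
                  (by linarith [hsmall (k0+j) (by omega)])
              have h2 : f.u p' ⊓ (decompSeq f.u (k0+j)).2.v m ⊓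
                    (decompSeq f.u (k0+j)).2.u (d (k0+j))
                  ≤ f.u p' ⊓ (decompSeq f.u ((k0+j)+1)).2.u (d ((k0+j)+1)) := by
                refine le_inf (le_trans inf_le_left inf_le_left) ?_
                rw [hU (d ((k0+j)+1)), hdsucc]
                have he : d (k0+j) + 1/(((k0+j:ℕ):ℚ)+2) - 1/(((k0+j:ℕ):ℚ)+2) = d (k0+j) := by
                  ring
                rw [he]
                refine le_sup_of_le_right (le_inf ?_ inf_le_right)
                exact le_trans inf_le_left h1
              refine le_trans h2 ?_
              have h3 := (hD ((k0+j)+1)).r2 p m hpm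
              calc f.u p' ⊓ (decompSeq f.u ((k0+j)+1)).2.u (d ((k0+j)+1))
                  = (f.u p' ⊓ (decompSeq f.u ((k0+j)+1)).2.u (d ((k0+j)+1))) ⊓
                    ((decompSeq f.u ((k0+j)+1)).2.u p ⊔ (decompSeq f.u ((k0+j)+1)).2.v m) := by
                    rw [h3, inf_top_eq]
                _ = ((f.u p' ⊓ (decompSeq f.u ((k0+j)+1)).2.u (d ((k0+j)+1))) ⊓
                      (decompSeq f.u ((k0+j)+1)).2.u p) ⊔
                    ((f.u p' ⊓ (decompSeq f.u ((k0+j)+1)).2.u (d ((k0+j)+1))) ⊓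
                      (decompSeq f.u ((k0+j)+1)).2.v m) := inf_sup_left _ _ _
                _ ≤ _ := by
                    refine sup_le (le_sup_of_le_left inf_le_right) (le_sup_of_le_right ?_)
                    exact le_inf (le_inf (le_trans inf_le_left inf_le_left) inf_le_right)
                      (le_trans inf_le_left inf_le_right)
      obtain ⟨nn, hnsum⟩ := harmonic_unbdd (m + 1) k0
      have hdj : m ≤ d (k0 + (nn - k0)) := by
        rw [hd]
        simp only
        have hsub : Finset.Ico k0 nn ⊆ Finset.Ico k0 (k0 + (nn - k0)) :=
          Finset.Ico_subset_Ico le_rfl (by omega)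
        have hmono := Finset.sum_le_sum_of_subset_of_nonneg
          (f := fun i : ℕ => (1/((i:ℚ)+2))) hsub (fun i _ _ => by positivity)
        linarith
      refine le_trans (Q (nn - k0)) (sup_le (le_iSup_of_le (k0 + (nn - k0)) le_rfl) ?_)
      have hbot : (decompSeq f.u (k0 + (nn - k0))).2.v m ⊓
          (decompSeq f.u (k0 + (nn - k0))).2.u (d (k0 + (nn - k0))) = ⊥ := by
        rw [inf_comm]
        exact (hD (k0 + (nn - k0))).r1 _ m hdj
      calc f.u p' ⊓ (decompSeq f.u (k0 + (nn - k0))).2.v m ⊓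
            (decompSeq f.u (k0 + (nn - k0))).2.u (d (k0 + (nn - k0)))
          ≤ (decompSeq f.u (k0 + (nn - k0))).2.v m ⊓
            (decompSeq f.u (k0 + (nn - k0))).2.u (d (k0 + (nn - k0))) :=
            inf_le_inf_right _ inf_le_right
        _ = ⊥ := hbot
        _ ≤ _ := bot_le
    · exact iSup_le fun k => (hD k).leu p
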